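/- arXiv:2006.10510 — 2 statements merged into one kernel-verified Lean document; each statement's English description precedes it below -/
import Mathlib

section
/- Let G be a finite group with a subgroup H, let x₁,…,x_m ∈ G lie in pairwise distinct conjugacy classes, and let c be a positive integer. Suppose Σ_i |x_i^G ∩ H| ≤ A and |x_i^G| ≥ B > 0 for all i. Then Σ_{i=1}^m |x_i^G| · (|x_i^G ∩ H| / |x_i^G|)^c ≤ B · (A/B)^c. -/
open scoped Classical

/-- Let `G` be a finite group, `H ≤ G`, and `x₁, …, x_m` lie in pairwise distinct
conjugacy classes. If `Σ_i |x_i^G ∩ H| ≤ A` and `|x_i^G| ≥ B > 0` for all `i`,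
then `Σ_i |x_i^G| · (|x_i^G ∩ H| / |x_i^G|)^c ≤ B (A/B)^c` for every `c ≥ 1`. -/
theorem sum_class_fraction_bound {G : Type*} [Group G] [Fintype G] (H : Subgroup G)
    (m : ℕ) (x : Fin m → G) (hdist : ∀ i j, IsConj (x i) (x j) → i = j)
    (A B : ℝ) (hA : 0 < A) (hB : 0 < B) (c : ℕ) (hc : 1 ≤ c)
    (hAbound : (∑ i, ((Finset.univ.filter fun g : G =>
        IsConj (x i) g ∧ g ∈ H).card : ℝ)) ≤ A)
    (hBbound : ∀ i, B ≤ ((Finset.univ.filter fun g : G => IsConj (x i) g).card : ℝ)) :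
    ∑ i, ((Finset.univ.filter fun g : G => IsConj (x i) g).card : ℝ) *
        (((Finset.univ.filter fun g : G => IsConj (x i) g ∧ g ∈ H).card : ℝ) /
          ((Finset.univ.filter fun g : G => IsConj (x i) g).card : ℝ)) ^ c ≤
      B * (A / B) ^ c := by
  set n : Fin m → ℝ := fun i =>
    ((Finset.univ.filter fun g : G => IsConj (x i) g).card : ℝ) with hn
  set a : Fin m → ℝ := fun i =>
    ((Finset.univ.filter fun g : G => IsConj (x i) g ∧ g ∈ H).card : ℝ) with ha
  have hnpos : ∀ i, 0 < n i := fun i => lt_of_lt_of_le hB (hBbound i)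
  have hanonneg : ∀ i, 0 ≤ a i := fun i => Nat.cast_nonneg _
  have haA : ∀ i, a i ≤ A := by
    intro i
    refine le_trans ?_ hAbound
    exact Finset.single_le_sum (fun j _ => hanonneg j) (Finset.mem_univ i)
  have hratio : ∀ i, a i / n i ≤ A / B := by
    intro i
    exact div_le_div₀ (le_of_lt hA) (haA i) hB (hBbound i)
  obtain ⟨k, rfl⟩ : ∃ k, c = k + 1 := ⟨c - 1, (Nat.succ_pred_eq_of_pos hc).symm⟩
  have key : ∀ i, n i * (a i / n i) ^ (k + 1) ≤ a i * (A / B) ^ k := by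
    intro i
    have hne : n i ≠ 0 := (hnpos i).ne'
    have h1 : n i * (a i / n i) ^ (k + 1) = a i * (a i / n i) ^ k := by
      rw [pow_succ]
      field_simp
    rw [h1]
    apply mul_le_mul_of_nonneg_left _ (hanonneg i)
    exact pow_le_pow_left₀ (div_nonneg (hanonneg i) (hnpos i).le) (hratio i) k
  calc ∑ i, n i * (a i / n i) ^ (k + 1)
      ≤ ∑ i, a i * (A / B) ^ k := Finset.sum_le_sum fun i _ => key i
    _ = (∑ i, a i) * (A / B) ^ k := by rw [Finset.sum_mul]
    _ ≤ A * (A / B) ^ k := by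
        apply mul_le_mul_of_nonneg_right hAbound
        positivity
    _ = B * (A / B) ^ (k + 1) := by
        rw [pow_succ]
        field_simp
end

section
/- Let G be a finite group and H ≤ G a subgroup such that |H|² < |x^G| for every element x ∈ H of prime order. Then there exists g ∈ G with H ∩ g⁻¹Hg = 1. -/
open scoped Classical
open Finset

lemma conj_count {G : Type*} [Group G] [Fintype G] (x : G) (T : Finset G) :
    (univ.filter fun g : G => g * x * g⁻¹ ∈ T).card
      = (T.filter fun y => IsConj x y).card * (univ.filter fun c : G => c * x * c⁻¹ = x).card := by
  rw [Finset.card_eq_sum_card_fiberwise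
    (f := fun g => g * x * g⁻¹) (t := T.filter fun y => IsConj x y)
    (fun g hg => by
      simp only [mem_coe, mem_filter, mem_univ, true_and] at hg ⊢
      exact ⟨hg, isConj_iff.mpr ⟨g, rfl⟩⟩)]
  rw [Finset.sum_congr rfl (fun y hy => ?_), Finset.sum_const, smul_eq_mul]
  obtain ⟨c, hcy⟩ := isConj_iff.mp (Finset.mem_filter.mp hy).2
  apply Finset.card_bij (fun (g : G) _ => c⁻¹ * g)
  · intro g hg
    simp only [mem_filter, mem_univ, true_and] at hg ⊢
    rcases hg with ⟨-, hg2⟩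
    have h1 : c⁻¹ * g * x * (c⁻¹ * g)⁻¹ = c⁻¹ * (g * x * g⁻¹) * c := by group
    rw [h1, hg2, ← hcy]; group
  · intro a _ b _ hab
    exact mul_left_cancel hab
  · intro d hd
    simp only [mem_filter, mem_univ, true_and] at hd
    refine ⟨c * d, ?_, by group⟩
    simp only [mem_filter, mem_univ, true_and]
    have h1 : c * d * x * (c * d)⁻¹ = c * (d * x * d⁻¹) * c⁻¹ := by group
    rw [h1, hd, hcy]
    exact ⟨(Finset.mem_filter.mp hy).1, rfl⟩

lemma prime_order_pow {G : Type*} [Group G] [Fintype G] {x : G} (hx : x ≠ 1) :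
    ∃ k : ℕ, ∃ p : ℕ, p.Prime ∧ orderOf (x ^ k) = p := by
  set n := orderOf x with hn
  have hn0 : n ≠ 0 := (orderOf_pos x).ne'
  have hn1 : n ≠ 1 := fun h1 => hx (orderOf_eq_one_iff.mp h1)
  have hp : n.minFac.Prime := Nat.minFac_prime hn1
  have hdvd : n.minFac ∣ n := Nat.minFac_dvd n
  exact ⟨n / n.minFac, n.minFac, hp, by
    rw [orderOf_pow, ← hn, Nat.gcd_eq_right (Nat.div_dvd_of_dvd hdvd),
      Nat.div_div_self hdvd hn0]⟩

/-- Let `G` be a finite group and `H ≤ G` a subgroup such that `|H|² < |x^G|`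
for every prime order element `x ∈ H`. Then there exists `g ∈ G` with
`H ∩ g⁻¹Hg = 1`. -/
theorem exists_regular_conjugate {G : Type*} [Group G] [Fintype G] (H : Subgroup G)
    (h : ∀ x ∈ H, (∃ p : ℕ, p.Prime ∧ orderOf x = p) →
      (Nat.card H) ^ 2 < (Finset.univ.filter fun g : G => IsConj x g).card) :
    ∃ g : G, ∀ x ∈ H, g * x * g⁻¹ ∈ H → x = 1 := by
  by_contra hcon
  push_neg at hcon
  -- strengthen to prime order witnesses
  have key : ∀ g : G, ∃ x : G, (x ∈ H ∧ ∃ p : ℕ, p.Prime ∧ orderOf x = p) ∧ g * x * g⁻¹ ∈ H := by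
    intro g
    obtain ⟨x, hxH, hxc, hx1⟩ := hcon g
    obtain ⟨k, p, hp, hord⟩ := prime_order_pow hx1
    refine ⟨x ^ k, ⟨pow_mem hxH k, p, hp, hord⟩, ?_⟩
    have : g * x ^ k * g⁻¹ = (g * x * g⁻¹) ^ k := by
      rw [conj_pow]
    rw [this]
    exact pow_mem hxc k
  set cH := Nat.card H with hcH
  set T : Finset G := univ.filter (· ∈ H) with hT
  have hTcard : T.card = cH := by
    rw [hcH, Nat.card_eq_fintype_card, hT, ← Fintype.card_subtype]
  set S : Finset G := univ.filter (fun x : G => x ∈ H ∧ ∃ p : ℕ, p.Prime ∧ orderOf x = p)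
    with hS
  set P : Finset (G × G) :=
    univ.filter (fun pr : G × G => pr.1 ∈ S ∧ pr.2 * pr.1 * pr.2⁻¹ ∈ T) with hP
  -- Step 1 : card G ≤ P.card
  choose f hf using key
  have step1 : Fintype.card G ≤ P.card := by
    rw [← Finset.card_univ (α := G)]
    apply Finset.card_le_card_of_injOn (fun g => (f g, g))
    · intro g _
      simp only [hP, mem_coe, mem_filter, mem_univ, true_and, hS, hT]
      exact ⟨(hf g).1, (hf g).2⟩
    · intro a _ b _ hab
      exact congrArg Prod.snd hab
  -- Step 2 : per-x bound
  have hG1 : 1 ≤ Fintype.card G := Fintype.card_pos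
  have step2 : ∀ x ∈ S,
      (univ.filter fun g : G => g * x * g⁻¹ ∈ T).card * cH ≤ Fintype.card G - 1 := by
    intro x hxS
    simp only [hS, mem_filter, mem_univ, true_and] at hxS
    obtain ⟨hxH, hxp⟩ := hxS
    have horb := h x hxH hxp
    have hCpos : 0 < (univ.filter fun c : G => c * x * c⁻¹ = x).card := by
      apply Finset.card_pos.mpr
      exact ⟨1, by simp⟩
    have horbC : (univ.filter fun y : G => IsConj x y).card
        * (univ.filter fun c : G => c * x * c⁻¹ = x).card = Fintype.card G := by
      have := conj_count x (univ : Finset G)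
      simpa using this.symm
    have hfilter : (T.filter fun y => IsConj x y).card ≤ cH := by
      rw [← hTcard]
      exact Finset.card_le_card (Finset.filter_subset _ _)
    have hlt : (univ.filter fun g : G => g * x * g⁻¹ ∈ T).card * cH < Fintype.card G := by
      rw [conj_count x T]
      calc (T.filter fun y => IsConj x y).card
            * (univ.filter fun c : G => c * x * c⁻¹ = x).card * cH
          ≤ cH * (univ.filter fun c : G => c * x * c⁻¹ = x).card * cH :=
            Nat.mul_le_mul_right _ (Nat.mul_le_mul_right _ hfilter)
        _ = cH ^ 2 * (univ.filter fun c : G => c * x * c⁻¹ = x).card := by ring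
        _ < (univ.filter fun y : G => IsConj x y).card
            * (univ.filter fun c : G => c * x * c⁻¹ = x).card :=
            (Nat.mul_lt_mul_right hCpos).mpr horb
        _ = Fintype.card G := horbC
    omega
  -- Step 3 : P.card * cH < card G * cH  via fiberwise sum
  have hPsum : P.card = ∑ x ∈ S, (univ.filter fun g : G => g * x * g⁻¹ ∈ T).card := by
    rw [Finset.card_eq_sum_card_fiberwise (f := Prod.fst) (t := S)
      (fun pr hpr => (Finset.mem_filter.mp hpr).2.1)]
    refine Finset.sum_congr rfl (fun x hx => ?_)
    apply Finset.card_bij (fun (pr : G × G) _ => pr.2)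
    · intro pr hpr
      simp only [hP, mem_filter, mem_univ, true_and] at hpr ⊢
      rcases hpr with ⟨⟨-, h2⟩, h3⟩
      rw [← h3]; exact h2
    · intro a ha b hb hab
      simp only [hP, mem_filter] at ha hb
      exact Prod.ext (ha.2.trans hb.2.symm) hab
    · intro g hg
      simp only [mem_filter, mem_univ, true_and] at hg
      exact ⟨(x, g), by simp [hP, hx, hg], rfl⟩
  have hSle : S.card ≤ cH := by
    rw [← hTcard]
    apply Finset.card_le_card
    intro x hx
    simp only [hS, hT, mem_filter, mem_univ, true_and] at hx ⊢
    exact hx.1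
  have step3 : P.card * cH < Fintype.card G * cH := by
    have : P.card * cH ≤ S.card * (Fintype.card G - 1) := by
      rw [hPsum, Finset.sum_mul]
      calc ∑ x ∈ S, (univ.filter fun g : G => g * x * g⁻¹ ∈ T).card * cH
          ≤ ∑ _x ∈ S, (Fintype.card G - 1) := Finset.sum_le_sum step2
        _ = S.card * (Fintype.card G - 1) := by rw [Finset.sum_const, smul_eq_mul]
      
    have hcHpos : 0 < cH := by
      rw [hcH]; exact Nat.card_pos
    calc P.card * cH ≤ S.card * (Fintype.card G - 1) := this
      _ ≤ cH * (Fintype.card G - 1) := Nat.mul_le_mul_right _ hSle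
      _ < cH * Fintype.card G := (Nat.mul_lt_mul_left hcHpos).mpr (by omega)
      _ = Fintype.card G * cH := Nat.mul_comm _ _
  have : P.card < Fintype.card G := Nat.lt_of_mul_lt_mul_right step3
  omega
end
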